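/- Let c, d > 2 and n = c + d. In ℂ[T_{ij}, T_∞], let I be the ideal generated by T_∞T_{ij}T_{kl} − T_{ik}T_{jl} + T_{il}T_{jk} for quadruples with i < j ≤ c < k < l, and T_{ij}T_{kl} − T_{ik}T_{jl} + T_{il}T_{jk} for all other quadruples i < j < k < l. Then T_∞ is not contained in √I, and the localization of ℂ[T_{ij}, T_∞]/I at T_∞ is an integral domain. -/

import Mathlib

open MvPolynomial

/-- Index set for the Plücker variables `T_{ij}`, `i < j` (0-indexed: `1 ≤ i` becomes `0 ≤ i`,
`j ≤ n` becomes `j.val < n`). -/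
abbrev PIdx (n : ℕ) := {p : Fin n × Fin n // p.1 < p.2}

/-- Index set for the variables `T_{ij}` together with the extra variable `T_∞`. -/
abbrev Idx (n : ℕ) := PIdx n ⊕ Unit

/-- The variable `T_{ij}`. -/
noncomputable def W {n : ℕ} (i j : Fin n) (h : i < j) : MvPolynomial (Idx n) ℂ :=
  X (Sum.inl ⟨(i, j), h⟩)

/-- The variable `T_∞`. -/
noncomputable def Tinf {n : ℕ} : MvPolynomial (Idx n) ℂ := X (Sum.inr ())

/-- Generators of the ideal `I`: `T_∞T_{ij}T_{kl} - T_{ik}T_{jl} + T_{il}T_{jk}` for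
quadruples `i < j ≤ c < k < l` (1-indexed; `j ≤ c` is `j.val < c` and `c + 1 ≤ k` is
`c ≤ k.val` in 0-indexed terms), and the Plücker trinomials
`T_{ij}T_{kl} - T_{ik}T_{jl} + T_{il}T_{jk}` for all other quadruples `i < j < k < l`. -/
def IGens (c n : ℕ) : Set (MvPolynomial (Idx n) ℂ) :=
  {P | ∃ (i j k l : Fin n) (hij : i < j) (hjk : j < k) (hkl : k < l),
    ((j.val < c ∧ c ≤ k.val) ∧
      P = Tinf * W i j hij * W k l hkl - W i k (hij.trans hjk) * W j l (hjk.trans hkl)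
            + W i l (hij.trans (hjk.trans hkl)) * W j k hjk) ∨
    (¬(j.val < c ∧ c ≤ k.val) ∧
      P = W i j hij * W k l hkl - W i k (hij.trans hjk) * W j l (hjk.trans hkl)
            + W i l (hij.trans (hjk.trans hkl)) * W j k hjk)}

/-- Generators of the ideal `J = I + (T_∞)`: the variable `T_∞`, the binomials
`-T_{ik}T_{jl} + T_{il}T_{jk}` for quadruples `i < j ≤ c < k < l`, and the Plücker
trinomials for all other quadruples `i < j < k < l`. -/
def JGens (c n : ℕ) : Set (MvPolynomial (Idx n) ℂ) :=
  insert Tinf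
    {P | ∃ (i j k l : Fin n) (hij : i < j) (hjk : j < k) (hkl : k < l),
      ((j.val < c ∧ c ≤ k.val) ∧
        P = - W i k (hij.trans hjk) * W j l (hjk.trans hkl)
              + W i l (hij.trans (hjk.trans hkl)) * W j k hjk) ∨
      (¬(j.val < c ∧ c ≤ k.val) ∧
        P = W i j hij * W k l hkl - W i k (hij.trans hjk) * W j l (hjk.trans hkl)
              + W i l (hij.trans (hjk.trans hkl)) * W j k hjk)}

namespace Stmt9Aux

open AddMonoidAlgebra

variable {n : ℕ}

/-- target variables: `x i = i`, `y i = n + i`, `s = 2n`. -/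
abbrev K (n : ℕ) := Fin (2 * n + 1)

def xc (i : Fin n) : K n := ⟨i.val, by omega⟩
def yc (i : Fin n) : K n := ⟨n + i.val, by omega⟩
def sc : K n := ⟨2 * n, by omega⟩

noncomputable def phiFun : Idx n → MvPolynomial (K n) ℂ
  | .inl p => X (xc p.val.1) * X (yc p.val.2) - X (xc p.val.2) * X (yc p.val.1)
  | .inr _ => X sc

noncomputable def phi (n : ℕ) : MvPolynomial (Idx n) ℂ →+* MvPolynomial (K n) ℂ :=
  (MvPolynomial.aeval phiFun).toRingHom

@[simp] lemma phi_W (i j : Fin n) (h : i < j) :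
    phi n (W i j h) = X (xc i) * X (yc j) - X (xc j) * X (yc i) := by
  simp only [phi, W, AlgHom.toRingHom_eq_coe, RingHom.coe_coe, aeval_X]
  rfl

@[simp] lemma phi_Tinf : phi n (Tinf (n := n)) = X sc := by
  simp only [phi, Tinf, AlgHom.toRingHom_eq_coe, RingHom.coe_coe, aeval_X]
  rfl

/-- Plücker trinomial generators (in the ring with the extra variable `T_∞`,
which does not occur in them). -/
def PL (n : ℕ) : Set (MvPolynomial (Idx n) ℂ) :=
  {P | ∃ (i j k l : Fin n) (hij : i < j) (hjk : j < k) (hkl : k < l),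
      P = W i j hij * W k l hkl - W i k (hij.trans hjk) * W j l (hjk.trans hkl)
            + W i l (hij.trans (hjk.trans hkl)) * W j k hjk}

lemma phi_PL {g : MvPolynomial (Idx n) ℂ} (hg : g ∈ PL n) : phi n g = 0 := by
  obtain ⟨i, j, k, l, hij, hjk, hkl, rfl⟩ := hg
  simp only [map_add, map_sub, map_mul, phi_W]
  ring

lemma span_PL_le_ker : Ideal.span (PL n) ≤ RingHom.ker (phi n) := by
  rw [Ideal.span_le]
  intro g hg
  exact phi_PL hg

/-! ### weights for the straightening induction -/

def wt : Idx n → ℕ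
  | .inl p => (p.val.2.val - p.val.1.val) ^ 2
  | .inr _ => 0

def mu (d : Idx n →₀ ℕ) : ℕ := d.sum fun v k => k * wt v

lemma mu_add (d e : Idx n →₀ ℕ) : mu (d + e) = mu d + mu e :=
  Finsupp.sum_add_index' (fun v => by simp) (fun v k₁ k₂ => by ring)

lemma mu_single (v : Idx n) (k : ℕ) : mu (Finsupp.single v k) = k * wt v :=
  Finsupp.sum_single_index (by simp)

/-- comparability of two Plücker index pairs -/
def Cmp (p q : PIdx n) : Prop :=
  (p.val.1 ≤ q.val.1 ∧ p.val.2 ≤ q.val.2) ∨ (q.val.1 ≤ p.val.1 ∧ q.val.2 ≤ p.val.2)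

/-- a monomial exponent is *standard* if its Plücker pairs are pairwise comparable -/
def Std (d : Idx n →₀ ℕ) : Prop :=
  ∀ p q : PIdx n, d (Sum.inl p) ≠ 0 → d (Sum.inl q) ≠ 0 → Cmp p q

/-- polynomials supported on standard monomials -/
noncomputable def StdSub (n : ℕ) : Submodule ℂ (MvPolynomial (Idx n) ℂ) where
  carrier := {F | ∀ d ∈ F.support, Std d}
  add_mem' := by
    intro F G hF hG d hd
    rcases Finset.mem_union.1 (MvPolynomial.support_add hd) with h | h
    · exact hF d h
    · exact hG d h
  zero_mem' := by simp
  smul_mem' := by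
    intro r F hF d hd
    exact hF d (MvPolynomial.support_smul hd)

noncomputable def VV (n : ℕ) : Submodule ℂ (MvPolynomial (Idx n) ℂ) :=
  StdSub n ⊔ (Ideal.span (PL n)).restrictScalars ℂ

lemma span_mem_VV {g : MvPolynomial (Idx n) ℂ} (hg : g ∈ Ideal.span (PL n)) : g ∈ VV n :=
  Submodule.mem_sup_right hg

lemma mem_StdSub {F : MvPolynomial (Idx n) ℂ} :
    F ∈ StdSub n ↔ ∀ d ∈ F.support, Std d := Iff.rfl

end Stmt9Aux

namespace Stmt9Aux

variable {n : ℕ}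

lemma monomial_decomp {d : Idx n →₀ ℕ} {P Q : Idx n} (hP : d P ≠ 0) (hQ : d Q ≠ 0)
    (hPQ : P ≠ Q) :
    Finsupp.single P 1 + Finsupp.single Q 1 + (d - Finsupp.single P 1 - Finsupp.single Q 1)
      = d := by
  ext v
  have h1 : 1 ≤ d P := Nat.one_le_iff_ne_zero.2 hP
  have h2 : 1 ≤ d Q := Nat.one_le_iff_ne_zero.2 hQ
  simp only [Finsupp.add_apply, Finsupp.tsub_apply, Finsupp.single_apply]
  split_ifs with hPv hQv hQv
  · exact absurd (hPv.trans hQv.symm) hPQ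
  · subst hPv; omega
  · subst hQv; omega
  · omega

lemma sq_ineq1 {A C E B : ℕ} (h1 : A < C) (h2 : C < E) (h3 : E < B) :
    (E - A) ^ 2 + (B - C) ^ 2 < (B - A) ^ 2 + (E - C) ^ 2 := by
  obtain ⟨p, hp, rfl⟩ : ∃ p, 1 ≤ p ∧ C = A + p := ⟨C - A, by omega, by omega⟩
  obtain ⟨q, hq, rfl⟩ : ∃ q, 1 ≤ q ∧ E = A + p + q := ⟨E - (A + p), by omega, by omega⟩
  obtain ⟨r, hr, rfl⟩ : ∃ r, 1 ≤ r ∧ B = A + p + q + r := ⟨B - (A + p + q), by omega, by omega⟩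
  have e1 : A + p + q - A = p + q := by omega
  have e2 : A + p + q + r - (A + p) = q + r := by omega
  have e3 : A + p + q + r - A = p + q + r := by omega
  have e4 : A + p + q - (A + p) = q := by omega
  rw [e1, e2, e3, e4]
  nlinarith

lemma sq_ineq2 {A C E B : ℕ} (h1 : A < C) (h2 : C < E) (h3 : E < B) :
    (C - A) ^ 2 + (B - E) ^ 2 < (B - A) ^ 2 + (E - C) ^ 2 := by
  obtain ⟨p, hp, rfl⟩ : ∃ p, 1 ≤ p ∧ C = A + p := ⟨C - A, by omega, by omega⟩
  obtain ⟨q, hq, rfl⟩ : ∃ q, 1 ≤ q ∧ E = A + p + q := ⟨E - (A + p), by omega, by omega⟩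
  obtain ⟨r, hr, rfl⟩ : ∃ r, 1 ≤ r ∧ B = A + p + q + r := ⟨B - (A + p + q), by omega, by omega⟩
  have e1 : A + p - A = p := by omega
  have e2 : A + p + q + r - (A + p + q) = r := by omega
  have e3 : A + p + q + r - A = p + q + r := by omega
  have e4 : A + p + q - (A + p) = q := by omega
  rw [e1, e2, e3, e4]
  nlinarith

lemma X_mul_X_mul_monomial (P Q : Idx n) (d' : Idx n →₀ ℕ) :
    (X P : MvPolynomial (Idx n) ℂ) * X Q * monomial d' 1
      = monomial (Finsupp.single P 1 + Finsupp.single Q 1 + d') 1 := by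
  rw [MvPolynomial.X, MvPolynomial.X, monomial_mul, monomial_mul]
  norm_num

lemma mono_mem (N : ℕ) : ∀ d : Idx n →₀ ℕ, mu d < N → (monomial d 1 : MvPolynomial (Idx n) ℂ) ∈ VV n := by
  induction N with
  | zero => intro d h; omega
  | succ N ih =>
    intro d hd
    by_cases hstd : Std d
    · apply Submodule.mem_sup_left
      rw [mem_StdSub]
      intro e he
      rw [MvPolynomial.support_monomial, if_neg (one_ne_zero)] at he
      rcases Finset.mem_singleton.1 he with rfl
      exact hstd
    · -- find an incomparable pair
      simp only [Std, not_forall] at hstd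
      obtain ⟨p, q, hp, hq, hcmp⟩ := hstd
      -- WLOG p.1 < q.1 and q.2 < p.2
      have key : ∀ p q : PIdx n, d (Sum.inl p) ≠ 0 → d (Sum.inl q) ≠ 0 →
          p.val.1 < q.val.1 → q.val.2 < p.val.2 →
          (monomial d 1 : MvPolynomial (Idx n) ℂ) ∈ VV n := by
        rintro ⟨⟨a, b⟩, hab⟩ ⟨⟨c0, e0⟩, hce⟩ hp hq h1 h2
        simp only at hp hq h1 h2 hab hce
        have hac : a < c0 := h1
        have heb : e0 < b := h2
        have hae : a < e0 := hac.trans hce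
        have hcb : c0 < b := hce.trans heb
        have hPQ : (Sum.inl ⟨(a, b), hab⟩ : Idx n) ≠ Sum.inl ⟨(c0, e0), hce⟩ := by
          intro h
          have : a = c0 := by
            have := Sum.inl_injective h
            exact congrArg (fun r : PIdx n => r.val.1) this
          exact absurd this (Fin.ne_of_lt h1)
        have hdec := monomial_decomp hp hq hPQ
        set d' : Idx n →₀ ℕ :=
          d - Finsupp.single (Sum.inl ⟨(a, b), hab⟩) 1
            - Finsupp.single (Sum.inl ⟨(c0, e0), hce⟩) 1 with hd'
        have h_orig : W a b hab * W c0 e0 hce * monomial d' 1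
            = (monomial d 1 : MvPolynomial (Idx n) ℂ) := by
          rw [W, W, X_mul_X_mul_monomial, hdec]
        have h_m1 : W a e0 hae * W c0 b hcb * monomial d' 1
            = (monomial (Finsupp.single (Sum.inl ⟨(a, e0), hae⟩) 1
                + Finsupp.single (Sum.inl ⟨(c0, b), hcb⟩) 1 + d') 1 : MvPolynomial (Idx n) ℂ) := by
          rw [W, W]; exact X_mul_X_mul_monomial _ _ d'
        have h_m2 : W a c0 hac * W e0 b heb * monomial d' 1
            = (monomial (Finsupp.single (Sum.inl ⟨(a, c0), hac⟩) 1
                + Finsupp.single (Sum.inl ⟨(e0, b), heb⟩) 1 + d') 1 : MvPolynomial (Idx n) ℂ) := by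
          rw [W, W]; exact X_mul_X_mul_monomial _ _ d'
        have hg : W a c0 hac * W e0 b heb - W a e0 hae * W c0 b hcb
            + W a b hab * W c0 e0 hce ∈ Ideal.span (PL n) := by
          apply Ideal.subset_span
          exact ⟨a, c0, e0, b, hac, hce, heb, rfl⟩
        have hrel : (monomial d 1 : MvPolynomial (Idx n) ℂ)
            = (W a c0 hac * W e0 b heb - W a e0 hae * W c0 b hcb
                + W a b hab * W c0 e0 hce) * monomial d' 1
              - W a c0 hac * W e0 b heb * monomial d' 1
              + W a e0 hae * W c0 b hcb * monomial d' 1 := by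
          rw [← h_orig]; ring
        rw [hrel]
        have hmu : mu d = mu d' + (b.val - a.val) ^ 2 + (e0.val - c0.val) ^ 2 := by
          conv_lhs => rw [← hdec]
          rw [mu_add, mu_add, mu_single, mu_single]
          show 1 * wt (Sum.inl ⟨(a, b), hab⟩) + 1 * wt (Sum.inl ⟨(c0, e0), hce⟩) + mu d' = _
          have w5 : wt (Sum.inl ⟨(a, b), hab⟩ : Idx n) = (b.val - a.val) ^ 2 := rfl
          have w6 : wt (Sum.inl ⟨(c0, e0), hce⟩ : Idx n) = (e0.val - c0.val) ^ 2 := rfl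
          rw [w5, w6]; ring
        have w1 : wt (Sum.inl ⟨(a, e0), hae⟩ : Idx n) = (e0.val - a.val) ^ 2 := rfl
        have w2 : wt (Sum.inl ⟨(c0, b), hcb⟩ : Idx n) = (b.val - c0.val) ^ 2 := rfl
        have w3 : wt (Sum.inl ⟨(a, c0), hac⟩ : Idx n) = (c0.val - a.val) ^ 2 := rfl
        have w4 : wt (Sum.inl ⟨(e0, b), heb⟩ : Idx n) = (b.val - e0.val) ^ 2 := rfl
        have hlt1 := sq_ineq1 (A := a.val) (C := c0.val) (E := e0.val) (B := b.val) h1 hce h2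
        have hlt2 := sq_ineq2 (A := a.val) (C := c0.val) (E := e0.val) (B := b.val) h1 hce h2
        have h_in1 : (monomial (Finsupp.single (Sum.inl ⟨(a, e0), hae⟩ : Idx n) 1
            + Finsupp.single (Sum.inl ⟨(c0, b), hcb⟩) 1 + d') 1 : MvPolynomial (Idx n) ℂ) ∈ VV n := by
          apply ih
          rw [mu_add, mu_add, mu_single, mu_single, w1, w2]
          omega
        have h_in2 : (monomial (Finsupp.single (Sum.inl ⟨(a, c0), hac⟩ : Idx n) 1
            + Finsupp.single (Sum.inl ⟨(e0, b), heb⟩) 1 + d') 1 : MvPolynomial (Idx n) ℂ) ∈ VV n := by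
          apply ih
          rw [mu_add, mu_add, mu_single, mu_single, w3, w4]
          omega
        apply Submodule.add_mem
        apply Submodule.sub_mem
        · exact span_mem_VV (Ideal.mul_mem_right _ _ hg)
        · rw [h_m2]; exact h_in2
        · rw [h_m1]; exact h_in1
      -- case analysis to get WLOG
      rcases lt_trichotomy p.val.1 q.val.1 with h1 | h1 | h1
      · have h2 : q.val.2 < p.val.2 := by
          by_contra h2
          exact hcmp (Or.inl ⟨le_of_lt h1, not_lt.1 h2⟩)
        exact key p q hp hq h1 h2
      · exfalso
        rcases le_total p.val.2 q.val.2 with h2 | h2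
        · exact hcmp (Or.inl ⟨le_of_eq h1, h2⟩)
        · exact hcmp (Or.inr ⟨le_of_eq h1.symm, h2⟩)
      · have h2 : p.val.2 < q.val.2 := by
          by_contra h2
          exact hcmp (Or.inr ⟨le_of_lt h1, not_lt.1 h2⟩)
        exact key q p hq hp h1 h2

theorem mem_VV (F : MvPolynomial (Idx n) ℂ) : F ∈ VV n := by
  rw [MvPolynomial.as_sum F]
  apply Submodule.sum_mem
  intro d _
  have : (monomial d (coeff d F) : MvPolynomial (Idx n) ℂ) = (coeff d F) • monomial d 1 := by
    rw [MvPolynomial.smul_monomial, smul_eq_mul, mul_one]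
  rw [this]
  exact Submodule.smul_mem _ _ (mono_mem (mu d + 1) d (Nat.lt_succ_self _))

end Stmt9Aux

namespace Stmt9Aux

open AddMonoidAlgebra MonomialOrder

variable {n : ℕ}

noncomputable def mo (n : ℕ) : MonomialOrder (K n) := MonomialOrder.lex

noncomputable def D (n : ℕ) : (K n →₀ ℕ) → (mo n).syn := fun e => (mo n).toSyn e

lemma D_inj : Function.Injective (D n) := (mo n).toSyn.injective

lemma D_add (a b : K n →₀ ℕ) : D n (a + b) = D n a + D n b := map_add _ _ _

lemma D_toLex (e : K n →₀ ℕ) : D n e = toLex e := rfl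

/-- leading exponent of the image of a variable -/
noncomputable def lmv : Idx n → (K n →₀ ℕ)
  | .inl p => Finsupp.single (xc p.val.1) 1 + Finsupp.single (yc p.val.2) 1
  | .inr _ => Finsupp.single sc 1

/-- leading exponent of the image of a monomial -/
noncomputable def EE (d : Idx n →₀ ℕ) : K n →₀ ℕ := d.sum fun v k => k • lmv v

lemma EE_add (d e : Idx n →₀ ℕ) : EE (d + e) = EE d + EE e :=
  Finsupp.sum_add_index' (fun v => by simp) (fun v k₁ k₂ => add_smul _ _ _)

lemma EE_single (v : Idx n) (k : ℕ) : EE (Finsupp.single v k) = k • lmv v :=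
  Finsupp.sum_single_index (by simp)

/-- key lex comparison : `x_j y_i < x_i y_j` for `i < j` -/
lemma lex_lt_key {i j : Fin n} (hij : i < j) :
    D n (Finsupp.single (xc j) 1 + Finsupp.single (yc i) 1)
      < D n (Finsupp.single (xc i) 1 + Finsupp.single (yc j) 1) := by
  rw [D_toLex, D_toLex]
  change (toLex (Finsupp.single (xc j) 1 + Finsupp.single (yc i) 1) : Lex (K n →₀ ℕ))
    < toLex (Finsupp.single (xc i) 1 + Finsupp.single (yc j) 1)
  rw [Finsupp.Lex.lt_iff]
  refine ⟨xc i, fun b hb => ?_, ?_⟩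
  · have hbv : b.val < i.val := hb
    have h1 : xc (n := n) j ≠ b := by
      intro h; have := congrArg Fin.val h; simp [xc] at this; omega
    have h2 : yc (n := n) i ≠ b := by
      intro h; have := congrArg Fin.val h; simp [yc] at this
      have := i.isLt; omega
    have h3 : xc (n := n) i ≠ b := by
      intro h; have := congrArg Fin.val h; simp [xc] at this; omega
    have h4 : yc (n := n) j ≠ b := by
      intro h; have := congrArg Fin.val h; simp [yc] at this
      have := j.isLt; omega
    simp [Finsupp.single_apply, h1, h2, h3, h4]
  · have h1 : xc (n := n) j ≠ xc i := by
      intro h; have := congrArg Fin.val h; simp [xc] at this; omega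
    have h2 : yc (n := n) i ≠ xc i := by
      intro h; have := congrArg Fin.val h; simp [yc, xc] at this
      have := i.isLt; omega
    have h4 : yc (n := n) j ≠ xc i := by
      intro h; have := congrArg Fin.val h; simp [yc, xc] at this
      have := j.isLt; omega
    simp [Finsupp.single_apply, h1, h2, h4]

/-- the image of each variable is monic with leading exponent `lmv v` -/
lemma phi_X_monic (v : Idx n) :
    ((phi n (X v)).Monic (D n)) ∧ supDegree (D n) (phi n (X v)) = D n (lmv v) := by
  cases v with
  | inr u =>
    have : phi n (X (Sum.inr u)) = monomial (Finsupp.single sc 1) (1 : ℂ) := by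
      have : phi n (X (Sum.inr u)) = X (sc (n := n)) := by
        simp only [phi, AlgHom.toRingHom_eq_coe, RingHom.coe_coe, aeval_X]; rfl
      rw [this, X]
    rw [this]
    constructor
    · show leadingCoeff (D n) (AddMonoidAlgebra.single _ (1:ℂ)) = 1
      rw [leadingCoeff_single D_inj]
    · show supDegree (D n) (AddMonoidAlgebra.single _ (1:ℂ)) = _
      rw [supDegree_single]
      simp [lmv]
  | inl p =>
    have hrepr : phi n (X (Sum.inl p))
        = monomial (Finsupp.single (xc p.val.1) 1 + Finsupp.single (yc p.val.2) 1) (1:ℂ)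
          + monomial (Finsupp.single (xc p.val.2) 1 + Finsupp.single (yc p.val.1) 1) (-1:ℂ) := by
      have h0 : phi n (X (Sum.inl p))
          = X (xc p.val.1) * X (yc p.val.2) - X (xc p.val.2) * X (yc p.val.1) := by
        simp only [phi, AlgHom.toRingHom_eq_coe, RingHom.coe_coe, aeval_X]; rfl
      rw [h0, X, X, X, X, monomial_mul, monomial_mul]
      rw [sub_eq_add_neg, ← map_neg]
      norm_num
    have hlt : supDegree (D n)
        (monomial (Finsupp.single (xc p.val.2) 1 + Finsupp.single (yc p.val.1) 1) (-1:ℂ))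
        < supDegree (D n)
        (monomial (Finsupp.single (xc p.val.1) 1 + Finsupp.single (yc p.val.2) 1) (1:ℂ)) := by
      show supDegree (D n) (AddMonoidAlgebra.single _ (-1:ℂ))
          < supDegree (D n) (AddMonoidAlgebra.single _ (1:ℂ))
      rw [supDegree_single, supDegree_single,
        if_neg (by norm_num : ¬ (-1 : ℂ) = 0), if_neg (by norm_num : ¬ (1 : ℂ) = 0)]
      exact lex_lt_key p.2
    constructor
    · rw [hrepr]
      rw [AddMonoidAlgebra.Monic, leadingCoeff_add_eq_left hlt]
      show leadingCoeff (D n) (AddMonoidAlgebra.single _ (1:ℂ)) = 1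
      rw [leadingCoeff_single D_inj]
    · rw [hrepr, supDegree_add_eq_left hlt]
      show supDegree (D n) (AddMonoidAlgebra.single _ (1:ℂ)) = _
      rw [supDegree_single, if_neg one_ne_zero]
      rfl

lemma prod_monic {ι : Type*} (s : Finset ι) (f : ι → MvPolynomial (K n) ℂ) (e : ι → K n →₀ ℕ)
    (h : ∀ i ∈ s, (f i).Monic (D n) ∧ supDegree (D n) (f i) = D n (e i)) :
    (∏ i ∈ s, f i).Monic (D n) ∧ supDegree (D n) (∏ i ∈ s, f i) = D n (∑ i ∈ s, e i) := by
  classical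
  induction s using Finset.induction_on with
  | empty =>
    constructor
    · exact monic_one D_inj
    · rw [Finset.prod_empty, Finset.sum_empty]
      show supDegree (D n) (AddMonoidAlgebra.single 0 (1:ℂ)) = _
      rw [supDegree_single, if_neg (by norm_num : ¬ (1:ℂ) = 0)]
  | insert a s' hns ih =>
    rw [Finset.prod_insert hns, Finset.sum_insert hns]
    have ha := h a (Finset.mem_insert_self a s')
    have hs' := ih fun i hi => h i (Finset.mem_insert_of_mem hi)
    constructor
    · exact Monic.mul D_inj D_add ha.1 hs'.1
    · rw [Monic.supDegree_mul_of_ne_zero_right D_inj D_add ha.1 hs'.1.ne_zero,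
        ha.2, hs'.2, ← D_add]

lemma pow_monic (p : MvPolynomial (K n) ℂ) (e : K n →₀ ℕ) (k : ℕ)
    (h : p.Monic (D n)) (hd : supDegree (D n) p = D n e) :
    (p ^ k).Monic (D n) ∧ supDegree (D n) (p ^ k) = D n (k • e) := by
  induction k with
  | zero =>
    constructor
    · exact monic_one D_inj
    · show supDegree (D n) (AddMonoidAlgebra.single 0 (1:ℂ)) = _
      rw [supDegree_single, if_neg (by norm_num : ¬ (1:ℂ) = 0), zero_smul]
  | succ k ih =>
    rw [pow_succ]
    constructor
    · exact Monic.mul D_inj D_add ih.1 h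
    · rw [Monic.supDegree_mul_of_ne_zero_right D_inj D_add ih.1 h.ne_zero, ih.2, hd,
        ← D_add, ← succ_nsmul]

lemma phi_monomial_monic (d : Idx n →₀ ℕ) :
    ((phi n (monomial d 1)).Monic (D n))
      ∧ supDegree (D n) (phi n (monomial d 1)) = D n (EE d) := by
  classical
  have hm : (monomial d (1:ℂ) : MvPolynomial (Idx n) ℂ) = ∏ v ∈ d.support, X v ^ d v := by
    rw [MvPolynomial.monomial_eq, map_one, one_mul]
    rfl
  have hphi : phi n (monomial d 1) = ∏ v ∈ d.support, (phi n (X v)) ^ d v := by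
    rw [hm, map_prod]
    simp [map_pow]
  have hEE : EE d = ∑ v ∈ d.support, d v • lmv v := rfl
  rw [hphi, hEE]
  exact prod_monic d.support _ _ fun v _ =>
    pow_monic _ _ (d v) (phi_X_monic v).1 (phi_X_monic v).2

end Stmt9Aux

namespace Stmt9Aux

open AddMonoidAlgebra

variable {n : ℕ}

lemma EE_apply (d : Idx n →₀ ℕ) (b : K n) :
    EE d b = ∑ v ∈ d.support, d v * lmv v b := by
  rw [EE, Finsupp.sum_apply]
  simp [Finsupp.sum, Finsupp.smul_apply]

lemma lmv_inl_xc (p : PIdx n) (i : Fin n) :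
    lmv (Sum.inl p) (xc i) = if p.val.1 = i then 1 else 0 := by
  have hy : yc p.val.2 ≠ xc i := by
    intro h; have := congrArg Fin.val h; simp [yc, xc] at this
    have := i.isLt; omega
  have hx : (xc p.val.1 = xc i) ↔ p.val.1 = i := by
    constructor
    · intro h; exact Fin.ext (by simpa [xc] using congrArg Fin.val h)
    · intro h; rw [h]
  simp only [lmv, Finsupp.add_apply, Finsupp.single_apply, if_neg hy, add_zero]
  simp [hx]

lemma lmv_inr_xc (u : Unit) (i : Fin n) : lmv (Sum.inr u : Idx n) (xc i) = 0 := by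
  have h : sc ≠ xc i := by
    intro h; have := congrArg Fin.val h; simp [sc, xc] at this
    have := i.isLt; omega
  simp [lmv, Finsupp.single_apply, h]

lemma lmv_inl_yc (p : PIdx n) (j : Fin n) :
    lmv (Sum.inl p) (yc j) = if p.val.2 = j then 1 else 0 := by
  have hxy : xc p.val.1 ≠ yc j := by
    intro h; have := congrArg Fin.val h; simp [yc, xc] at this
    have := p.val.1.isLt; omega
  have hy : (yc p.val.2 = yc j) ↔ p.val.2 = j := by
    constructor
    · intro h; exact Fin.ext (by simpa [yc] using congrArg Fin.val h)
    · intro h; rw [h]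
  simp only [lmv, Finsupp.add_apply, Finsupp.single_apply, if_neg hxy, zero_add]
  simp [hy]

lemma lmv_inr_yc (u : Unit) (j : Fin n) : lmv (Sum.inr u : Idx n) (yc j) = 0 := by
  have h : sc ≠ yc j := by
    intro h; have := congrArg Fin.val h; simp [sc, yc] at this
    have := j.isLt; omega
  simp [lmv, Finsupp.single_apply, h]

lemma lmv_inl_sc (p : PIdx n) : lmv (Sum.inl p) (sc) = 0 := by
  have h1 : xc p.val.1 ≠ sc := by
    intro h; have := congrArg Fin.val h; simp [sc, xc] at this
    have := p.val.1.isLt; omega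
  have h2 : yc p.val.2 ≠ sc := by
    intro h; have := congrArg Fin.val h; simp [sc, yc] at this
    have := p.val.2.isLt; omega
  simp [lmv, Finsupp.single_apply, h1, h2]

lemma lmv_inr_sc (u : Unit) : lmv (Sum.inr u : Idx n) (sc) = 1 := by
  simp [lmv, Finsupp.single_apply]

lemma EE_sc (d : Idx n →₀ ℕ) : EE d (sc) = d (Sum.inr ()) := by
  classical
  rw [EE_apply]
  rw [Finset.sum_congr rfl (g := fun v => if v = Sum.inr () then d v else 0) ?_]
  · rw [Finset.sum_ite_eq' d.support (Sum.inr ()) d]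
    split_ifs with h
    · rfl
    · exact (Finsupp.notMem_support_iff.1 h).symm
  · intro v _
    cases v with
    | inl p => rw [lmv_inl_sc]; simp
    | inr u => cases u; rw [lmv_inr_sc]; simp

lemma EE_x_marg_ne (d : Idx n →₀ ℕ) {p : PIdx n} (h : d (Sum.inl p) ≠ 0) :
    EE d (xc p.val.1) ≠ 0 := by
  rw [EE_apply]
  intro h0
  rw [Finset.sum_eq_zero_iff] at h0
  have := h0 (Sum.inl p) (Finsupp.mem_support_iff.2 h)
  rw [lmv_inl_xc, if_pos rfl, mul_one] at this
  exact h this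

lemma EE_y_marg_ne (d : Idx n →₀ ℕ) {p : PIdx n} (h : d (Sum.inl p) ≠ 0) :
    EE d (yc p.val.2) ≠ 0 := by
  rw [EE_apply]
  intro h0
  rw [Finset.sum_eq_zero_iff] at h0
  have := h0 (Sum.inl p) (Finsupp.mem_support_iff.2 h)
  rw [lmv_inl_yc, if_pos rfl, mul_one] at this
  exact h this

lemma EE_x_marg_mem (d : Idx n →₀ ℕ) {i : Fin n} (h : EE d (xc i) ≠ 0) :
    ∃ p : PIdx n, d (Sum.inl p) ≠ 0 ∧ p.val.1 = i := by
  by_contra hno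
  push_neg at hno
  apply h
  rw [EE_apply]
  apply Finset.sum_eq_zero
  intro v hv
  cases v with
  | inr u => cases u; rw [lmv_inr_xc, mul_zero]
  | inl r =>
    rw [lmv_inl_xc]
    split_ifs with hri
    · exact absurd hri (hno r (Finsupp.mem_support_iff.1 hv))
    · rw [mul_zero]

lemma EE_y_marg_mem (d : Idx n →₀ ℕ) {j : Fin n} (h : EE d (yc j) ≠ 0) :
    ∃ p : PIdx n, d (Sum.inl p) ≠ 0 ∧ p.val.2 = j := by
  by_contra hno
  push_neg at hno
  apply h
  rw [EE_apply]
  apply Finset.sum_eq_zero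
  intro v hv
  cases v with
  | inr u => cases u; rw [lmv_inr_yc, mul_zero]
  | inl r =>
    rw [lmv_inl_yc]
    split_ifs with hri
    · exact absurd hri (hno r (Finsupp.mem_support_iff.1 hv))
    · rw [mul_zero]

def inlMass (d : Idx n →₀ ℕ) : ℕ :=
  d.sum fun v k => match v with | .inl _ => k | .inr _ => 0

lemma inlMass_add (d e : Idx n →₀ ℕ) : inlMass (d + e) = inlMass d + inlMass e :=
  Finsupp.sum_add_index' (fun v => by cases v <;> rfl)
    (fun v k₁ k₂ => by cases v <;> simp)

lemma inlMass_single_inl (p : PIdx n) : inlMass (Finsupp.single (Sum.inl p : Idx n) 1) = 1 := by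
  rw [inlMass, Finsupp.sum_single_index] <;> rfl

lemma inlMass_pos {d : Idx n →₀ ℕ} {p : PIdx n} (h : d (Sum.inl p) ≠ 0) : 0 < inlMass d := by
  have hmem : (Sum.inl p : Idx n) ∈ d.support := Finsupp.mem_support_iff.2 h
  have hle : d (Sum.inl p) ≤ inlMass d := by
    rw [inlMass, Finsupp.sum]
    exact Finset.single_le_sum (f := fun v => match v with | .inl _ => d v | .inr _ => 0)
      (fun v _ => by cases v <;> simp) hmem
  omega

lemma sub_single_add {d : Idx n →₀ ℕ} {v : Idx n} (h : d v ≠ 0) :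
    (d - Finsupp.single v 1) + Finsupp.single v 1 = d := by
  ext w
  have h1 : 1 ≤ d v := Nat.one_le_iff_ne_zero.2 h
  simp only [Finsupp.add_apply, Finsupp.tsub_apply, Finsupp.single_apply]
  split_ifs with hv
  · subst hv; omega
  · omega

lemma Std_sub {d : Idx n →₀ ℕ} {v : Idx n} (h : Std d) :
    Std (d - Finsupp.single v 1) := by
  intro p q hp hq
  apply h p q
  · intro h0; apply hp; rw [Finsupp.tsub_apply, h0]; simp
  · intro h0; apply hq; rw [Finsupp.tsub_apply, h0]; simp

lemma std_min_pair (d : Idx n →₀ ℕ) (hstd : Std d) {p₀ : PIdx n} (h₀ : d (Sum.inl p₀) ≠ 0)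
    {i0 j0 : Fin n}
    (hi0 : ∀ i, EE d (xc i) ≠ 0 → i0 ≤ i) (hi0' : EE d (xc i0) ≠ 0)
    (hj0 : ∀ j, EE d (yc j) ≠ 0 → j0 ≤ j) (hj0' : EE d (yc j0) ≠ 0) :
    ∃ q : PIdx n, d (Sum.inl q) ≠ 0 ∧ q.val.1 = i0 ∧ q.val.2 = j0 := by
  obtain ⟨r1, hr1, hr1i⟩ := EE_x_marg_mem d hi0'
  obtain ⟨r2, hr2, hr2j⟩ := EE_y_marg_mem d hj0'
  rcases hstd r1 r2 hr1 hr2 with ⟨h11, h12⟩ | ⟨h21, h22⟩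
  · have hj : r1.val.2 = j0 := le_antisymm (hr2j ▸ h12) (hj0 _ (EE_y_marg_ne d hr1))
    exact ⟨r1, hr1, hr1i, hj⟩
  · have hi : r2.val.1 = i0 := le_antisymm (hr1i ▸ h21) (hi0 _ (EE_x_marg_ne d hr2))
    exact ⟨r2, hr2, hi, hr2j⟩

lemma EE_inj_zero {d1 d2 : Idx n →₀ ℕ} (h0 : ∀ p : PIdx n, d1 (Sum.inl p) = 0)
    (hE : EE d1 = EE d2) : d1 = d2 := by
  have hz2 : ∀ p : PIdx n, d2 (Sum.inl p) = 0 := by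
    intro p
    by_contra h
    have h2 : EE d2 (xc p.val.1) ≠ 0 := EE_x_marg_ne d2 h
    rw [← hE] at h2
    obtain ⟨r, hr, _⟩ := EE_x_marg_mem d1 h2
    exact hr (h0 r)
  ext v
  cases v with
  | inl p => rw [h0 p, hz2 p]
  | inr u =>
    cases u
    have := congrArg (fun E : K n →₀ ℕ => E sc) hE
    simpa [EE_sc] using this

lemma EE_inj_std : ∀ N (d1 d2 : Idx n →₀ ℕ), inlMass d1 ≤ N → Std d1 → Std d2 →
    EE d1 = EE d2 → d1 = d2 := by
  intro N
  induction N with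
  | zero =>
    intro d1 d2 hm h1 h2 hE
    apply EE_inj_zero _ hE
    intro p
    by_contra h
    have := inlMass_pos h
    omega
  | succ N ih =>
    intro d1 d2 hm h1 h2 hE
    classical
    by_cases h0 : ∀ p : PIdx n, d1 (Sum.inl p) = 0
    · exact EE_inj_zero h0 hE
    push_neg at h0
    obtain ⟨p₀, hp₀⟩ := h0
    set S1 := Finset.univ.filter (fun i : Fin n => EE d1 (xc i) ≠ 0) with hS1
    have hS1ne : S1.Nonempty :=
      ⟨p₀.val.1, Finset.mem_filter.2 ⟨Finset.mem_univ _, EE_x_marg_ne d1 hp₀⟩⟩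
    set S2 := Finset.univ.filter (fun j : Fin n => EE d1 (yc j) ≠ 0) with hS2
    have hS2ne : S2.Nonempty :=
      ⟨p₀.val.2, Finset.mem_filter.2 ⟨Finset.mem_univ _, EE_y_marg_ne d1 hp₀⟩⟩
    set i0 := S1.min' hS1ne with hi0def
    set j0 := S2.min' hS2ne with hj0def
    have hi0' : EE d1 (xc i0) ≠ 0 := (Finset.mem_filter.1 (S1.min'_mem hS1ne)).2
    have hj0' : EE d1 (yc j0) ≠ 0 := (Finset.mem_filter.1 (S2.min'_mem hS2ne)).2
    have hi0 : ∀ i, EE d1 (xc i) ≠ 0 → i0 ≤ i := fun i hi =>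
      S1.min'_le i (Finset.mem_filter.2 ⟨Finset.mem_univ _, hi⟩)
    have hj0 : ∀ j, EE d1 (yc j) ≠ 0 → j0 ≤ j := fun j hj =>
      S2.min'_le j (Finset.mem_filter.2 ⟨Finset.mem_univ _, hj⟩)
    obtain ⟨q1, hq1, hq1i, hq1j⟩ := std_min_pair d1 h1 hp₀ hi0 hi0' hj0 hj0'
    -- transport to d2
    have hi0'2 : EE d2 (xc i0) ≠ 0 := by rw [← hE]; exact hi0'
    have hj0'2 : EE d2 (yc j0) ≠ 0 := by rw [← hE]; exact hj0'
    have hi02 : ∀ i, EE d2 (xc i) ≠ 0 → i0 ≤ i := fun i hi => hi0 i (by rwa [hE])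
    have hj02 : ∀ j, EE d2 (yc j) ≠ 0 → j0 ≤ j := fun j hj => hj0 j (by rwa [hE])
    obtain ⟨r, hr, _⟩ := EE_x_marg_mem d2 hi0'2
    obtain ⟨q2, hq2, hq2i, hq2j⟩ := std_min_pair d2 h2 hr hi02 hi0'2 hj02 hj0'2
    have hq12 : q1 = q2 := by
      apply Subtype.ext
      apply Prod.ext
      · rw [hq1i, hq2i]
      · rw [hq1j, hq2j]
    set v0 : Idx n := Sum.inl q1 with hv0
    have e1 : (d1 - Finsupp.single v0 1) + Finsupp.single v0 1 = d1 := sub_single_add hq1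
    have e2 : (d2 - Finsupp.single v0 1) + Finsupp.single v0 1 = d2 := by
      apply sub_single_add
      rw [hv0, hq12]
      exact hq2
    have hE' : EE (d1 - Finsupp.single v0 1) = EE (d2 - Finsupp.single v0 1) := by
      have t1 : EE (d1 - Finsupp.single v0 1) + EE (Finsupp.single v0 1) = EE d1 := by
        rw [← EE_add, e1]
      have t2 : EE (d2 - Finsupp.single v0 1) + EE (Finsupp.single v0 1) = EE d2 := by
        rw [← EE_add, e2]
      have := t1.trans (hE.trans t2.symm)
      exact add_right_cancel this
    have hmass : inlMass (d1 - Finsupp.single v0 1) ≤ N := by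
      have hthis := inlMass_add (d1 - Finsupp.single v0 1) (Finsupp.single v0 1)
      rw [e1] at hthis
      have hone : inlMass (Finsupp.single v0 1) = 1 := inlMass_single_inl q1
      rw [hone] at hthis
      omega
    have hsub := ih (d1 - Finsupp.single v0 1) (d2 - Finsupp.single v0 1) hmass
      (Std_sub h1) (Std_sub h2) hE'
    rw [← e1, ← e2, hsub]

end Stmt9Aux

namespace Stmt9Aux

open AddMonoidAlgebra

variable {n : ℕ}

lemma phi_apply (x : MvPolynomial (Idx n) ℂ) : phi n x = MvPolynomial.aeval phiFun x := rfl

lemma phi_smul (c : ℂ) (x : MvPolynomial (Idx n) ℂ) : phi n (c • x) = c • phi n x := by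
  rw [phi_apply, phi_apply, map_smul]

theorem std_indep {F : MvPolynomial (Idx n) ℂ} (hF : F ∈ StdSub n) (h0 : phi n F = 0) :
    F = 0 := by
  classical
  by_contra hne
  apply absurd h0
  have hsum : phi n F = ∑ d ∈ F.support, phi n (monomial d (coeff d F)) := by
    conv_lhs => rw [MvPolynomial.as_sum F]
    rw [map_sum]
  rw [hsum]
  have hfd : ∀ d, (monomial d (coeff d F) : MvPolynomial (Idx n) ℂ)
      = (coeff d F) • monomial d 1 := by
    intro d
    rw [MvPolynomial.smul_monomial, smul_eq_mul, mul_one]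
  apply AddMonoidAlgebra.sum_ne_zero_of_injOn_supDegree' (D := D n)
  · -- some nonzero term
    obtain ⟨d, hd⟩ := (MvPolynomial.support_nonempty (p := F)).2 hne
    refine ⟨d, hd, ?_⟩
    rw [hfd d, phi_smul]
    exact smul_ne_zero (MvPolynomial.mem_support_iff.1 hd)
      ((phi_monomial_monic d).1.ne_zero)
  · -- injectivity on supDegrees
    intro d1 hd1 d2 hd2 heq
    simp only [Function.comp_apply] at heq
    have hsupp : ∀ d : Idx n →₀ ℕ, d ∈ F.support →
        supDegree (D n) (phi n (monomial d (coeff d F))) = D n (EE d) := by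
      intro d hd
      rw [hfd d, phi_smul]
      have hc : coeff d F ≠ 0 := MvPolynomial.mem_support_iff.1 hd
      have hsup : (coeff d F • phi n (monomial d 1)).support
          = (phi n (monomial d 1)).support :=
        Finsupp.support_smul_eq hc
      show ((coeff d F • phi n (monomial d 1)).support).sup (D n) = _
      rw [hsup]
      exact (phi_monomial_monic d).2
    rw [Finset.mem_coe] at hd1 hd2
    rw [hsupp d1 hd1, hsupp d2 hd2] at heq
    have hEE : EE d1 = EE d2 := D_inj heq
    exact EE_inj_std (inlMass d1) d1 d2 le_rfl (hF d1 hd1) (hF d2 hd2) hEE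

theorem ker_phi (n : ℕ) : RingHom.ker (phi n) = Ideal.span (PL n) := by
  apply le_antisymm
  · intro F hF
    rw [RingHom.mem_ker] at hF
    obtain ⟨G, hG, H, hH, hGH⟩ := Submodule.mem_sup.1 (mem_VV F)
    rw [Submodule.restrictScalars_mem] at hH
    have hphiH : phi n H = 0 := RingHom.mem_ker.1 (span_PL_le_ker hH)
    have hphiG : phi n G = 0 := by
      have : phi n G + phi n H = 0 := by rw [← map_add, hGH]; exact hF
      rw [hphiH, add_zero] at this
      exact this
    have : G = 0 := std_indep hG hphiG
    rw [← hGH, this, zero_add]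
    exact hH
  · exact span_PL_le_ker

end Stmt9Aux

namespace Stmt9Aux

open MvPolynomial

variable (c n : ℕ)

abbrev Rt (n : ℕ) := Localization.Away (Tinf (n := n))

noncomputable def iR : MvPolynomial (Idx n) ℂ →+* Rt n := algebraMap _ _

noncomputable def invT : Rt n := IsLocalization.Away.invSelf (Tinf (n := n))

lemma T_invT : iR n (Tinf) * invT n = 1 := by
  unfold iR invT; exact IsLocalization.Away.mul_invSelf (S := Rt n) (x := Tinf (n := n))

lemma Tinf_unit : IsUnit (iR n (Tinf)) :=
  isUnit_iff_exists_inv.2 ⟨invT n, T_invT n⟩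

noncomputable def vfun : Idx n → Rt n
  | .inl p => if p.val.2.val < c then invT n * iR n (X (Sum.inl p)) else iR n (X (Sum.inl p))
  | .inr _ => iR n Tinf

noncomputable def ufun : Idx n → Rt n
  | .inl p => if p.val.2.val < c then iR n Tinf * iR n (X (Sum.inl p)) else iR n (X (Sum.inl p))
  | .inr _ => iR n Tinf

noncomputable def vh : MvPolynomial (Idx n) ℂ →+* Rt n :=
  eval₂Hom ((iR n).comp MvPolynomial.C) (vfun c n)

noncomputable def uh : MvPolynomial (Idx n) ℂ →+* Rt n :=
  eval₂Hom ((iR n).comp MvPolynomial.C) (ufun c n)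

lemma vh_C (a : ℂ) : vh c n (C a) = iR n (C a) := by simp [vh]

lemma uh_C (a : ℂ) : uh c n (C a) = iR n (C a) := by simp [uh]

lemma vh_X (w : Idx n) : vh c n (X w) = vfun c n w := by simp [vh]

lemma uh_X (w : Idx n) : uh c n (X w) = ufun c n w := by simp [uh]

lemma vh_W (a b : Fin n) (h : a < b) :
    vh c n (W a b h) = if b.val < c then invT n * iR n (W a b h) else iR n (W a b h) := by
  rw [W, vh_X]; rfl

lemma uh_W (a b : Fin n) (h : a < b) :
    uh c n (W a b h) = if b.val < c then iR n Tinf * iR n (W a b h) else iR n (W a b h) := by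
  rw [W, uh_X]; rfl

lemma vh_Tinf : vh c n Tinf = iR n Tinf := by exact vh_X c n (Sum.inr ())

lemma uh_Tinf : uh c n Tinf = iR n Tinf := by exact uh_X c n (Sum.inr ())

lemma vh_Tinf_unit : IsUnit (vh c n Tinf) := by rw [vh_Tinf]; exact Tinf_unit n

lemma uh_Tinf_unit : IsUnit (uh c n Tinf) := by rw [uh_Tinf]; exact Tinf_unit n

noncomputable def VH : Rt n →+* Rt n :=
  Localization.awayLift (vh c n) Tinf (vh_Tinf_unit c n)

noncomputable def UH : Rt n →+* Rt n :=
  Localization.awayLift (uh c n) Tinf (uh_Tinf_unit c n)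

lemma VH_iR (x : MvPolynomial (Idx n) ℂ) : VH c n (iR n x) = vh c n x :=
  IsLocalization.Away.lift_eq Tinf (vh_Tinf_unit c n) x

lemma UH_iR (x : MvPolynomial (Idx n) ℂ) : UH c n (iR n x) = uh c n x :=
  IsLocalization.Away.lift_eq Tinf (uh_Tinf_unit c n) x

lemma UH_invT : UH c n (invT n) = invT n := by
  have h1 : iR n Tinf * UH c n (invT n) = 1 := by
    have h := congrArg (UH c n) (T_invT n)
    rw [map_mul, map_one, UH_iR, uh_Tinf] at h
    exact h
  calc UH c n (invT n) = UH c n (invT n) * (iR n Tinf * invT n) := by rw [T_invT, mul_one]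
    _ = (iR n Tinf * UH c n (invT n)) * invT n := by ring
    _ = invT n := by rw [h1, one_mul]

lemma VH_invT : VH c n (invT n) = invT n := by
  have h1 : iR n Tinf * VH c n (invT n) = 1 := by
    have h := congrArg (VH c n) (T_invT n)
    rw [map_mul, map_one, VH_iR, vh_Tinf] at h
    exact h
  calc VH c n (invT n) = VH c n (invT n) * (iR n Tinf * invT n) := by rw [T_invT, mul_one]
    _ = (iR n Tinf * VH c n (invT n)) * invT n := by ring
    _ = invT n := by rw [h1, one_mul]

lemma UH_comp_VH : (UH c n).comp (VH c n) = RingHom.id (Rt n) := by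
  apply IsLocalization.ringHom_ext (Submonoid.powers (Tinf (n := n)))
  rw [RingHom.comp_assoc]
  apply MvPolynomial.ringHom_ext
  · intro a
    simp only [RingHom.coe_comp, Function.comp_apply, RingHom.id_apply]
    rw [show (algebraMap (MvPolynomial (Idx n) ℂ) (Rt n)) (C a) = iR n (C a) from rfl,
      VH_iR, vh_C, UH_iR, uh_C]
  · intro w
    simp only [RingHom.coe_comp, Function.comp_apply, RingHom.id_apply]
    rw [show (algebraMap (MvPolynomial (Idx n) ℂ) (Rt n)) (X w) = iR n (X w) from rfl,
      VH_iR, vh_X]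
    cases w with
    | inr u =>
      show UH c n (iR n Tinf) = _
      rw [UH_iR, uh_Tinf]; rfl
    | inl p =>
      show UH c n (if p.val.2.val < c then invT n * iR n (X (Sum.inl p)) else iR n (X (Sum.inl p))) = _
      by_cases hsm : p.val.2.val < c
      · rw [if_pos hsm, map_mul, UH_invT, UH_iR, uh_X]
        show invT n * (if p.val.2.val < c then iR n Tinf * iR n (X (Sum.inl p)) else _) = _
        rw [if_pos hsm, ← mul_assoc, mul_comm (invT n) (iR n Tinf), T_invT, one_mul]
      · rw [if_neg hsm, UH_iR, uh_X]
        show (if p.val.2.val < c then iR n Tinf * iR n (X (Sum.inl p)) else iR n (X (Sum.inl p))) = _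
        rw [if_neg hsm]

lemma VH_comp_UH : (VH c n).comp (UH c n) = RingHom.id (Rt n) := by
  apply IsLocalization.ringHom_ext (Submonoid.powers (Tinf (n := n)))
  rw [RingHom.comp_assoc]
  apply MvPolynomial.ringHom_ext
  · intro a
    simp only [RingHom.coe_comp, Function.comp_apply, RingHom.id_apply]
    rw [show (algebraMap (MvPolynomial (Idx n) ℂ) (Rt n)) (C a) = iR n (C a) from rfl,
      UH_iR, uh_C, VH_iR, vh_C]
  · intro w
    simp only [RingHom.coe_comp, Function.comp_apply, RingHom.id_apply]
    rw [show (algebraMap (MvPolynomial (Idx n) ℂ) (Rt n)) (X w) = iR n (X w) from rfl,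
      UH_iR, uh_X]
    cases w with
    | inr u =>
      show VH c n (iR n Tinf) = _
      rw [VH_iR, vh_Tinf]; rfl
    | inl p =>
      show VH c n (if p.val.2.val < c then iR n Tinf * iR n (X (Sum.inl p)) else iR n (X (Sum.inl p))) = _
      by_cases hsm : p.val.2.val < c
      · rw [if_pos hsm, map_mul, VH_iR, vh_Tinf, VH_iR, vh_X]
        show iR n Tinf * (if p.val.2.val < c then invT n * iR n (X (Sum.inl p)) else _) = _
        rw [if_pos hsm, ← mul_assoc, T_invT, one_mul]
      · rw [if_neg hsm, VH_iR, vh_X]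
        show (if p.val.2.val < c then invT n * iR n (X (Sum.inl p)) else iR n (X (Sum.inl p))) = _
        rw [if_neg hsm]

end Stmt9Aux

namespace Stmt9Aux

open MvPolynomial

variable (c n : ℕ)

abbrev Ls (n : ℕ) := Localization.Away (X (sc (n := n)) : MvPolynomial (K n) ℂ)

noncomputable def iB : MvPolynomial (K n) ℂ →+* Ls n := algebraMap _ _

lemma sc_X_ne_zero : (X (sc (n := n)) : MvPolynomial (K n) ℂ) ≠ 0 :=
  MvPolynomial.X_ne_zero _

lemma iB_inj : Function.Injective (iB n) :=
  IsLocalization.injective _ (powers_le_nonZeroDivisors_of_noZeroDivisors (sc_X_ne_zero n))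

noncomputable instance : IsDomain (Ls n) :=
  IsLocalization.isDomain_localization
    (powers_le_nonZeroDivisors_of_noZeroDivisors (sc_X_ne_zero n))

lemma phiTinf_unit : IsUnit (((iB n).comp (phi n)) Tinf) := by
  rw [RingHom.comp_apply, phi_Tinf]
  exact IsLocalization.Away.algebraMap_isUnit _

noncomputable def phit : Rt n →+* Ls n :=
  Localization.awayLift ((iB n).comp (phi n)) Tinf (phiTinf_unit n)

lemma phit_iR (x : MvPolynomial (Idx n) ℂ) : phit n (iR n x) = iB n (phi n x) :=
  IsLocalization.Away.lift_eq Tinf (phiTinf_unit n) x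

lemma ker_phit : RingHom.ker (phit n) = Ideal.map (iR n) (Ideal.span (PL n)) := by
  apply le_antisymm
  · intro x hx
    rw [RingHom.mem_ker] at hx
    obtain ⟨⟨r, s⟩, rfl⟩ := IsLocalization.mk'_surjective (Submonoid.powers (Tinf (n := n))) x
    have hspec : IsLocalization.mk' (Rt n) r s * iR n ↑s = iR n r :=
      IsLocalization.mk'_spec (Rt n) r s
    have happ := congrArg (phit n) hspec
    rw [map_mul, hx, zero_mul] at happ
    have h0 : iB n (phi n r) = 0 := by
      rw [← phit_iR]
      exact happ.symm
    have hphir : phi n r = 0 := by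
      apply iB_inj
      rw [h0, map_zero]
    have hr : r ∈ Ideal.span (PL n) := by
      rw [← ker_phi, RingHom.mem_ker]; exact hphir
    have hmem : iR n r ∈ Ideal.map (iR n) (Ideal.span (PL n)) := Ideal.mem_map_of_mem _ hr
    obtain ⟨u, hu⟩ := IsLocalization.map_units (Rt n) s
    have hx_eq : IsLocalization.mk' (Rt n) r s = iR n r * ↑u⁻¹ := by
      rw [← hspec, (show iR n ↑s = (u : Rt n) from hu.symm), mul_assoc, Units.mul_inv, mul_one]
    show IsLocalization.mk' (Rt n) r s ∈ _
    rw [hx_eq]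
    exact Ideal.mul_mem_right _ _ hmem
  · rw [Ideal.map_le_iff_le_comap, Ideal.span_le]
    intro g hg
    simp only [Set.mem_setOf_eq, SetLike.mem_coe, Ideal.mem_comap, RingHom.mem_ker]
    rw [phit_iR, phi_PL hg, map_zero]

set_option synthInstance.maxHeartbeats 1000000 in
/-- master computation, case 1 : `i < j ≤ c < k < l` -/
lemma master1 {i j k l : Fin n} (hij : i < j) (hjk : j < k) (hkl : k < l)
    (hcnd : j.val < c ∧ c ≤ k.val) :
    vh c n (Tinf * W i j hij * W k l hkl - W i k (hij.trans hjk) * W j l (hjk.trans hkl)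
        + W i l (hij.trans (hjk.trans hkl)) * W j k hjk)
      = iR n (W i j hij * W k l hkl - W i k (hij.trans hjk) * W j l (hjk.trans hkl)
        + W i l (hij.trans (hjk.trans hkl)) * W j k hjk) := by
  obtain ⟨hjc, hck⟩ := hcnd
  have hkc : ¬ k.val < c := by omega
  have hlc : ¬ l.val < c := by have := hkl; have : k.val < l.val := this; omega
  simp only [map_sub, map_add, map_mul, vh_W, vh_Tinf, if_pos hjc, if_neg hkc, if_neg hlc]
  have hT := T_invT n
  set a := iR n (W i j hij)
  set b := iR n (W k l hkl)
  set e1 := iR n (W i k (hij.trans hjk))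
  set e2 := iR n (W j l (hjk.trans hkl))
  set e3 := iR n (W i l (hij.trans (hjk.trans hkl)))
  set e4 := iR n (W j k hjk)
  linear_combination (a * b) * hT

set_option synthInstance.maxHeartbeats 1000000 in
/-- master computation, case 2 : all other quadruples -/
lemma master2 {i j k l : Fin n} (hij : i < j) (hjk : j < k) (hkl : k < l)
    (hcnd : ¬(j.val < c ∧ c ≤ k.val)) :
    ∃ e : ℕ,
    vh c n (W i j hij * W k l hkl - W i k (hij.trans hjk) * W j l (hjk.trans hkl)
        + W i l (hij.trans (hjk.trans hkl)) * W j k hjk)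
      = invT n ^ e * iR n (W i j hij * W k l hkl - W i k (hij.trans hjk) * W j l (hjk.trans hkl)
        + W i l (hij.trans (hjk.trans hkl)) * W j k hjk) := by
  have hijv : i.val < j.val := hij
  have hjkv : j.val < k.val := hjk
  have hklv : k.val < l.val := hkl
  by_cases hk : k.val < c
  · have hj : j.val < c := by omega
    by_cases hl : l.val < c
    · -- all six pairs small
      refine ⟨2, ?_⟩
      simp only [map_sub, map_add, map_mul, vh_W, if_pos hj, if_pos hk, if_pos hl]
      ring
    · -- pairs with second index `l` are big
      refine ⟨1, ?_⟩
      simp only [map_sub, map_add, map_mul, vh_W, if_pos hj, if_pos hk, if_neg hl]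
      ring
  · -- `c ≤ k`, hence `c ≤ j` by `hcnd`, and all pairs are big
    have hj : ¬ j.val < c := fun h => hcnd ⟨h, by omega⟩
    have hl : ¬ l.val < c := by omega
    refine ⟨0, ?_⟩
    simp only [map_sub, map_add, map_mul, vh_W, if_neg hj, if_neg hk, if_neg hl]
    ring

lemma span_vh_IGens :
    Ideal.span ((vh c n) '' IGens c n) = Ideal.span ((iR n) '' PL n) := by
  apply le_antisymm
  · rw [Ideal.span_le]
    rintro _ ⟨g, hg, rfl⟩
    obtain ⟨i, j, k, l, hij, hjk, hkl, hg'⟩ := hg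
    rcases hg' with ⟨hcnd, rfl⟩ | ⟨hcnd, rfl⟩
    · rw [master1 c n hij hjk hkl hcnd]
      exact Ideal.subset_span ⟨_, ⟨i, j, k, l, hij, hjk, hkl, rfl⟩, rfl⟩
    · obtain ⟨e, he⟩ := master2 c n hij hjk hkl hcnd
      rw [he]
      exact Ideal.mul_mem_left _ _
        (Ideal.subset_span ⟨_, ⟨i, j, k, l, hij, hjk, hkl, rfl⟩, rfl⟩)
  · rw [Ideal.span_le]
    rintro _ ⟨p, hp, rfl⟩
    obtain ⟨i, j, k, l, hij, hjk, hkl, rfl⟩ := hp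
    by_cases hcnd : j.val < c ∧ c ≤ k.val
    · have h1 := master1 c n hij hjk hkl hcnd
      rw [← h1]
      apply Ideal.subset_span
      exact ⟨_, ⟨i, j, k, l, hij, hjk, hkl, Or.inl ⟨hcnd, rfl⟩⟩, rfl⟩
    · obtain ⟨e, he⟩ := master2 c n hij hjk hkl hcnd
      have hTe : iR n (Tinf) ^ e * invT n ^ e = 1 := by
        rw [← mul_pow, T_invT, one_pow]
      have : iR n (W i j hij * W k l hkl - W i k (hij.trans hjk) * W j l (hjk.trans hkl)
          + W i l (hij.trans (hjk.trans hkl)) * W j k hjk)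
          = iR n (Tinf) ^ e * vh c n (W i j hij * W k l hkl
              - W i k (hij.trans hjk) * W j l (hjk.trans hkl)
              + W i l (hij.trans (hjk.trans hkl)) * W j k hjk) := by
        rw [he, ← mul_assoc, hTe, one_mul]
      rw [this]
      exact Ideal.mul_mem_left _ _
        (Ideal.subset_span ⟨_, ⟨i, j, k, l, hij, hjk, hkl, Or.inr ⟨hcnd, rfl⟩⟩, rfl⟩)

noncomputable def Psi : Rt n →+* Ls n := (phit n).comp (VH c n)

lemma map_VH_I :
    Ideal.map (VH c n) (Ideal.map (iR n) (Ideal.span (IGens c n)))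
      = Ideal.map (iR n) (Ideal.span (PL n)) := by
  rw [Ideal.map_map, Ideal.map_span, Ideal.map_span]
  have hcomp : ∀ x, ((VH c n).comp (iR n)) x = vh c n x := fun x => VH_iR c n x
  have himg : ((VH c n).comp (iR n)) '' IGens c n = (vh c n) '' IGens c n := by
    apply Set.image_congr
    intro g _
    exact hcomp g
  rw [himg, span_vh_IGens]

lemma ker_Psi :
    RingHom.ker (Psi c n) = Ideal.map (iR n) (Ideal.span (IGens c n)) := by
  ext x
  rw [RingHom.mem_ker]
  constructor
  · intro hx
    have h1 : VH c n x ∈ RingHom.ker (phit n) := hx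
    rw [ker_phit, ← map_VH_I c n] at h1
    have h2 : UH c n (VH c n x) ∈
        Ideal.map (UH c n) (Ideal.map (VH c n) (Ideal.map (iR n) (Ideal.span (IGens c n)))) :=
      Ideal.mem_map_of_mem _ h1
    rw [Ideal.map_map, UH_comp_VH, Ideal.map_id] at h2
    have h3 : UH c n (VH c n x) = x := RingHom.congr_fun (UH_comp_VH c n) x
    rwa [h3] at h2
  · intro hx
    have h1 : VH c n x ∈ Ideal.map (VH c n) (Ideal.map (iR n) (Ideal.span (IGens c n))) :=
      Ideal.mem_map_of_mem _ hx
    rw [map_VH_I c n, ← ker_phit] at h1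
    exact h1

end Stmt9Aux

namespace Stmt9Aux

open MvPolynomial

variable (c n : ℕ)

lemma Tinf_ne_zero : (Tinf : MvPolynomial (Idx n) ℂ) ≠ 0 := MvPolynomial.X_ne_zero _

lemma iR_inj : Function.Injective (iR n) :=
  IsLocalization.injective _ (powers_le_nonZeroDivisors_of_noZeroDivisors (Tinf_ne_zero n))

lemma isDomain_quot :
    IsDomain (Rt n ⧸ Ideal.map (iR n) (Ideal.span (IGens c n))) := by
  rw [← ker_Psi c n]
  exact Function.Injective.isDomain (RingHom.kerLift (Psi c n))
    (RingHom.kerLift_injective (Psi c n))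

lemma Tinf_not_in_radical : Tinf ∉ (Ideal.span (IGens c n)).radical := by
  intro h
  rw [Ideal.mem_radical_iff] at h
  obtain ⟨m, hm⟩ := h
  have h1 : iR n (Tinf ^ m) ∈ Ideal.map (iR n) (Ideal.span (IGens c n)) :=
    Ideal.mem_map_of_mem _ hm
  rw [← ker_Psi c n, RingHom.mem_ker] at h1
  have h2 : Psi c n (iR n Tinf) = iB n (X (sc (n := n))) := by
    show phit n (VH c n (iR n Tinf)) = _
    rw [VH_iR, vh_Tinf, phit_iR, phi_Tinf]
  have h3 : Psi c n (iR n (Tinf ^ m)) = iB n (X (sc (n := n))) ^ m := by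
    rw [map_pow, map_pow, h2]
  rw [h3] at h1
  have hunit : IsUnit (iB n (X (sc (n := n)))) := IsLocalization.Away.algebraMap_isUnit _
  have : IsUnit ((0 : Ls n)) := by rw [← h1]; exact hunit.pow m
  exact not_isUnit_zero this

set_option maxHeartbeats 2000000 in
set_option synthInstance.maxHeartbeats 1000000 in
lemma isDomain_final :
    IsDomain (Localization.Away (Ideal.Quotient.mk (Ideal.span (IGens c n)) Tinf)) := by
  haveI hdom := isDomain_quot c n
  set I := Ideal.span (IGens c n) with hI
  set I' := Ideal.map (iR n) I with hI'
  set tb := Ideal.Quotient.mk I Tinf with htb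
  have hle : I ≤ Ideal.comap (iR n) I' := Ideal.le_comap_map
  set qm := Ideal.quotientMap I' (iR n) hle with hqm
  have hq_unit : IsUnit (qm tb) := by
    rw [htb, hqm, show Ideal.quotientMap I' (iR n) hle (Ideal.Quotient.mk I Tinf)
        = Ideal.Quotient.mk I' (iR n Tinf) from Ideal.quotientMap_mk]
    refine isUnit_iff_exists_inv.2 ⟨Ideal.Quotient.mk I' (invT n), ?_⟩
    rw [← map_mul, T_invT, map_one]
  set Θ := Localization.awayLift qm tb hq_unit with hΘ
  have hΘalg : ∀ x : MvPolynomial (Idx n) ℂ ⧸ I,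
      Θ (algebraMap (MvPolynomial (Idx n) ℂ ⧸ I) (Localization.Away tb) x) = qm x := fun x =>
    IsLocalization.Away.lift_eq tb hq_unit x
  have hinj : Function.Injective Θ := by
    rw [injective_iff_map_eq_zero]
    intro z hz
    obtain ⟨⟨rb, s⟩, rfl⟩ := IsLocalization.mk'_surjective (Submonoid.powers tb) z
    obtain ⟨r, rfl⟩ := Ideal.Quotient.mk_surjective rb
    have hspec : IsLocalization.mk' (Localization.Away tb) (Ideal.Quotient.mk I r) s
        * algebraMap (MvPolynomial (Idx n) ℂ ⧸ I) (Localization.Away tb)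
            ((s : ↥(Submonoid.powers tb)) : MvPolynomial (Idx n) ℂ ⧸ I)
        = algebraMap (MvPolynomial (Idx n) ℂ ⧸ I) (Localization.Away tb)
            (Ideal.Quotient.mk I r) :=
      IsLocalization.mk'_spec (Localization.Away tb) (Ideal.Quotient.mk I r) s
    have hqr : qm (Ideal.Quotient.mk I r) = 0 := by
      rw [← hΘalg, ← hspec, map_mul, hz]
      exact zero_mul
        (Θ ((algebraMap (MvPolynomial (Idx n) ℂ ⧸ I) (Localization.Away tb)) ↑s))
    rw [hqm, show Ideal.quotientMap I' (iR n) hle (Ideal.Quotient.mk I r)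
        = Ideal.Quotient.mk I' (iR n r) from Ideal.quotientMap_mk,
      Ideal.Quotient.eq_zero_iff_mem] at hqr
    obtain ⟨⟨a, s'⟩, hh⟩ := (IsLocalization.mem_map_algebraMap_iff
      (Submonoid.powers (Tinf (n := n))) (Rt n)).1 hqr
    obtain ⟨m, hms⟩ := s'.2
    have hra : r * ↑s' = ↑a := by
      apply iR_inj
      rw [map_mul]
      exact hh
    have hmem : Tinf ^ m * r ∈ I := by
      rw [show (Tinf ^ m : MvPolynomial (Idx n) ℂ) = ↑s' from hms, mul_comm, hra]
      exact a.2
    rw [IsLocalization.mk'_eq_zero_iff]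
    refine ⟨⟨tb ^ m, ⟨m, rfl⟩⟩, ?_⟩
    show tb ^ m * Ideal.Quotient.mk I r = 0
    rw [htb, ← map_pow, ← map_mul, Ideal.Quotient.eq_zero_iff_mem]
    exact hmem
  exact Function.Injective.isDomain Θ hinj

end Stmt9Aux

/-- For `c, d > 2` and `n = c + d`, the variable `T_∞` is not contained in the radical of
the ideal `I`, and the localization of `ℂ[T_{ij}, T_∞]/I` at (the class of) `T_∞`
is an integral domain. -/
theorem stmt_9 (c d : ℕ) (hc : 2 < c) (hd : 2 < d) :
    Tinf ∉ (Ideal.span (IGens c (c + d))).radical ∧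
    IsDomain (Localization.Away
      (Ideal.Quotient.mk (Ideal.span (IGens c (c + d))) Tinf)) := by
  exact ⟨Stmt9Aux.Tinf_not_in_radical c (c + d), Stmt9Aux.isDomain_final c (c + d)⟩
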